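/- arXiv:2108.09560 — 7 statements merged into one kernel-verified Lean document; each statement's English description precedes it below -/
import Mathlib

section
/- For all nonnegative integers t ≤ n (with n ≥ 1), the alternating sum $\sum_{t=0}^{n}(-1)^t\frac{(2n-t)!}{t!\,(n-t)!\,(n+1-t)!}=0$. -/
open Polynomial Finset

private lemma cohen_key (n : ℕ) (hn : 1 ≤ n) :
    ∑ t ∈ Finset.range (n + 1),
      (-1 : ℝ) ^ t * (n.choose t) * ((2 * n - t).choose (n - 1)) = 0 := by
  have hP : (∑ t ∈ Finset.range (n + 1),
      (Polynomial.C ((-1 : ℝ) ^ t * n.choose t)) * X ^ t * (X + 1) ^ (2 * n - t))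
      = (X + 1) ^ n := by
    have h1 : ((-X : ℝ[X]) + (X + 1)) ^ n
        = ∑ t ∈ Finset.range (n + 1), (-X) ^ t * (X + 1) ^ (n - t) * (n.choose t : ℝ[X]) :=
      add_pow _ _ _
    have h2 : ((-X : ℝ[X]) + (X + 1)) = 1 := by ring
    calc ∑ t ∈ range (n + 1), (C ((-1 : ℝ) ^ t * n.choose t)) * X ^ t * (X + 1) ^ (2 * n - t)
        = ∑ t ∈ range (n + 1),
            ((-X : ℝ[X]) ^ t * (X + 1) ^ (n - t) * (n.choose t : ℝ[X])) * (X + 1) ^ n := by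
          refine Finset.sum_congr rfl fun t ht => ?_
          have ht' : t ≤ n := Nat.lt_succ_iff.mp (mem_range.mp ht)
          have h3 : 2 * n - t = (n - t) + n := by omega
          rw [h3, pow_add, neg_pow]
          simp only [map_mul, map_pow, map_neg, map_one, Polynomial.C_eq_natCast]
          ring
      _ = (((-X : ℝ[X]) + (X + 1)) ^ n) * (X + 1) ^ n := by rw [h1, ← Finset.sum_mul]
      _ = (X + 1) ^ n := by rw [h2, one_pow, one_mul]
  have hc := congrArg (fun p => Polynomial.coeff p (n + 1)) hP
  simp only [Polynomial.finset_sum_coeff] at hc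
  have hterm : ∀ t ∈ Finset.range (n + 1),
      ((C ((-1 : ℝ) ^ t * n.choose t)) * X ^ t * (X + 1) ^ (2 * n - t)).coeff (n + 1)
      = (-1 : ℝ) ^ t * (n.choose t) * ((2 * n - t).choose (n - 1)) := by
    intro t ht
    have ht' : t ≤ n := Nat.lt_succ_iff.mp (mem_range.mp ht)
    have h4 : n + 1 = (n + 1 - t) + t := by omega
    rw [mul_assoc, Polynomial.coeff_C_mul, h4, Polynomial.coeff_X_pow_mul,
      Polynomial.coeff_X_add_one_pow]
    have h5 : (2 * n - t).choose (n + 1 - t) = (2 * n - t).choose (n - 1) := by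
      have h6 : n + 1 - t ≤ 2 * n - t := by omega
      have h7 : (2 * n - t) - (n + 1 - t) = n - 1 := by omega
      rw [← h7, Nat.choose_symm h6]
    rw [h5]
  rw [Finset.sum_congr rfl hterm] at hc
  simpa [Polynomial.coeff_X_add_one_pow,
    Nat.choose_eq_zero_of_lt (Nat.lt_succ_self n)] using hc

/-- Cohen's identity: for `n ≥ 1`,
`∑_{t=0}^{n} (-1)^t (2n-t)! / (t! (n-t)! (n+1-t)!) = 0`. -/
theorem cohen_alternating_factorial_sum (n : ℕ) (hn : 1 ≤ n) :
    ∑ t ∈ Finset.range (n + 1),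
      (-1 : ℝ) ^ t * ((2 * n - t).factorial : ℝ) /
        ((t.factorial : ℝ) * ((n - t).factorial : ℝ) * ((n + 1 - t).factorial : ℝ)) = 0 := by
  have key := cohen_key n hn
  have hn0 : (n : ℝ) ≠ 0 := Nat.cast_ne_zero.mpr (by omega)
  have hterm : ∀ t ∈ Finset.range (n + 1),
      (-1 : ℝ) ^ t * ((2 * n - t).factorial : ℝ) /
        ((t.factorial : ℝ) * ((n - t).factorial : ℝ) * ((n + 1 - t).factorial : ℝ))
      = ((-1 : ℝ) ^ t * (n.choose t) * ((2 * n - t).choose (n - 1))) / (n : ℝ) := by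
    intro t ht
    have ht' : t ≤ n := Nat.lt_succ_iff.mp (mem_range.mp ht)
    have e1 : n.choose t * t.factorial * (n - t).factorial = n.factorial :=
      Nat.choose_mul_factorial_mul_factorial ht'
    have h6 : n - 1 ≤ 2 * n - t := by omega
    have e2 : (2 * n - t).choose (n - 1) * (n - 1).factorial * ((2 * n - t) - (n - 1)).factorial
        = (2 * n - t).factorial := Nat.choose_mul_factorial_mul_factorial h6
    have h7 : (2 * n - t) - (n - 1) = n + 1 - t := by omega
    rw [h7] at e2
    have p1 : (t.factorial : ℝ) ≠ 0 := Nat.cast_ne_zero.mpr t.factorial_ne_zero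
    have p2 : ((n - t).factorial : ℝ) ≠ 0 := Nat.cast_ne_zero.mpr (n - t).factorial_ne_zero
    have p3 : ((n + 1 - t).factorial : ℝ) ≠ 0 := Nat.cast_ne_zero.mpr (n + 1 - t).factorial_ne_zero
    have p5 : ((n - 1).factorial : ℝ) ≠ 0 := Nat.cast_ne_zero.mpr (n - 1).factorial_ne_zero
    have e1' : (n.choose t : ℝ) * t.factorial * (n - t).factorial = n.factorial := by
      exact_mod_cast congrArg (Nat.cast : ℕ → ℝ) e1
    have e2' : ((2 * n - t).choose (n - 1) : ℝ) * (n - 1).factorial * (n + 1 - t).factorial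
        = (2 * n - t).factorial := by
      exact_mod_cast congrArg (Nat.cast : ℕ → ℝ) e2
    have hnn : (n : ℝ) * ((n - 1).factorial : ℝ) = (n.factorial : ℝ) := by
      exact_mod_cast congrArg (Nat.cast : ℕ → ℝ) (Nat.mul_factorial_pred (by omega : n ≠ 0))
    have main : ((2 * n - t).factorial : ℝ) /
        ((t.factorial : ℝ) * ((n - t).factorial : ℝ) * ((n + 1 - t).factorial : ℝ))
        = ((n.choose t : ℝ) * ((2 * n - t).choose (n - 1) : ℝ)) / (n : ℝ) := by
      rw [div_eq_div_iff (by positivity) hn0]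
      apply mul_right_cancel₀ p5
      linear_combination ((2 * n - t).factorial : ℝ) * hnn
        - (((2 * n - t).choose (n - 1) : ℝ) * ((n - 1).factorial : ℝ)
            * ((n + 1 - t).factorial : ℝ)) * e1'
        - (n.factorial : ℝ) * e2'
    rw [mul_div_assoc, main]
    ring
  rw [Finset.sum_congr rfl hterm, ← Finset.sum_div, key, zero_div]
end

section
/- For nonnegative integers $\mu \le \nu$, one has $\binom{\nu+1/2}{\nu-\mu}\binom{\nu+1/2}{\mu} = 2^{-2\nu-1}\binom{2\nu+1}{\nu+1}\binom{2\nu+2}{2\mu+1}$, where binomial coefficients with half-integer top argument are defined via the Gamma function: $\binom{x}{k} = \frac{\Gamma(x+1)}{\Gamma(k+1)\Gamma(x-k+1)}$. -/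
open Real in
lemma gamma_half (n : ℕ) :
    Real.Gamma ((n : ℝ) + 1 / 2) =
      ((2 * n).factorial : ℝ) * Real.sqrt π / (2 ^ (2 * n) * (n.factorial : ℝ)) := by
  induction n with
  | zero => simpa using Real.Gamma_one_half_eq
  | succ n ih =>
      have h : ((n : ℝ) + 1) + 1 / 2 = ((n : ℝ) + 1 / 2) + 1 := by ring
      push_cast
      rw [h, Real.Gamma_add_one (by positivity), ih]
      have h2 : (2 * (n + 1)).factorial = (2 * n + 2) * ((2 * n + 1) * (2 * n).factorial) := by
        rw [show 2 * (n + 1) = (2 * n + 1) + 1 by ring, Nat.factorial_succ, Nat.factorial_succ]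
      rw [h2, Nat.factorial_succ]
      have hf : ((n.factorial : ℝ)) ≠ 0 := Nat.cast_ne_zero.mpr n.factorial_ne_zero
      field_simp
      push_cast
      ring

/-- The generalized binomial coefficient `x choose k` for real `x` and natural `k`,
defined via the Gamma function: `Γ(x+1) / (Γ(k+1) Γ(x-k+1))`. -/
noncomputable def gammaBinom (x : ℝ) (k : ℕ) : ℝ :=
  Real.Gamma (x + 1) / (Real.Gamma ((k : ℝ) + 1) * Real.Gamma (x - (k : ℝ) + 1))

/-- For nonnegative integers `μ ≤ ν`,
`(ν+1/2 choose ν-μ)(ν+1/2 choose μ) = 2^{-2ν-1} C(2ν+1, ν+1) C(2ν+2, 2μ+1)`. -/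
theorem half_integer_binomial_identity (ν μ : ℕ) (hμν : μ ≤ ν) :
    gammaBinom ((ν : ℝ) + 1 / 2) (ν - μ) * gammaBinom ((ν : ℝ) + 1 / 2) μ =
      (2 : ℝ) ^ (-(2 * (ν : ℤ)) - 1) * ((2 * ν + 1).choose (ν + 1) : ℝ) *
        ((2 * ν + 2).choose (2 * μ + 1) : ℝ) := by
  obtain ⟨d, rfl⟩ : ∃ d, ν = μ + d := ⟨ν - μ, (Nat.add_sub_cancel' hμν).symm⟩
  simp only [gammaBinom, Nat.add_sub_cancel_left]
  -- rewrite the Gamma values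
  have e1 : ((μ + d : ℕ) : ℝ) + 1 / 2 + 1 = ((μ + d + 1 : ℕ) : ℝ) + 1 / 2 := by push_cast; ring
  have e2 : ((μ + d : ℕ) : ℝ) + 1 / 2 - (d : ℝ) + 1 = ((μ + 1 : ℕ) : ℝ) + 1 / 2 := by
    push_cast; ring
  have e3 : ((μ + d : ℕ) : ℝ) + 1 / 2 - (μ : ℝ) + 1 = ((d + 1 : ℕ) : ℝ) + 1 / 2 := by
    push_cast; ring
  rw [e1, e2, e3, Real.Gamma_nat_eq_factorial, Real.Gamma_nat_eq_factorial,
    gamma_half, gamma_half, gamma_half]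
  -- choose values
  rw [Nat.cast_choose ℝ (by omega : μ + d + 1 ≤ 2 * (μ + d) + 1),
    Nat.cast_choose ℝ (by omega : 2 * μ + 1 ≤ 2 * (μ + d) + 2)]
  have hz : (2 : ℝ) ^ (-(2 * ((μ + d : ℕ) : ℤ)) - 1) = ((2 : ℝ) ^ (2 * (μ + d) + 1))⁻¹ := by
    rw [← zpow_natCast (2 : ℝ) (2 * (μ + d) + 1), ← zpow_neg]
    congr 1
    push_cast
    ring
  rw [hz]
  -- simplify subtractions in choose
  rw [show 2 * (μ + d) + 1 - (μ + d + 1) = μ + d by omega,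
      show 2 * (μ + d) + 2 - (2 * μ + 1) = 2 * d + 1 by omega]
  rw [show 2 * (μ + d) + 2 = 2 * (μ + d + 1) by ring]
  -- factorial step identities
  have f1 : ((2 * (μ + d + 1)).factorial : ℝ)
      = (2 * (μ + d) + 2) * ((2 * (μ + d) + 1).factorial : ℝ) := by
    rw [show 2 * (μ + d + 1) = (2 * (μ + d) + 1) + 1 by ring, Nat.factorial_succ]
    push_cast; ring
  have f2 : ((2 * (μ + 1)).factorial : ℝ) = (2 * μ + 2) * ((2 * μ + 1).factorial : ℝ) := by
    rw [show 2 * (μ + 1) = (2 * μ + 1) + 1 by ring, Nat.factorial_succ]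
    push_cast; ring
  have f3 : ((2 * (d + 1)).factorial : ℝ) = (2 * d + 2) * ((2 * d + 1).factorial : ℝ) := by
    rw [show 2 * (d + 1) = (2 * d + 1) + 1 by ring, Nat.factorial_succ]
    push_cast; ring
  have f4 : (((μ + d + 1)).factorial : ℝ) = (μ + d + 1) * ((μ + d).factorial : ℝ) := by
    rw [Nat.factorial_succ]; push_cast; ring
  have f5 : (((μ + 1)).factorial : ℝ) = (μ + 1) * (μ.factorial : ℝ) := by
    rw [Nat.factorial_succ]; push_cast; ring
  have f6 : (((d + 1)).factorial : ℝ) = (d + 1) * (d.factorial : ℝ) := by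
    rw [Nat.factorial_succ]; push_cast; ring
  rw [f1, f2, f3, f4, f5, f6]
  have n1 : ((μ + d).factorial : ℝ) ≠ 0 := Nat.cast_ne_zero.mpr (Nat.factorial_ne_zero _)
  have n2 : (μ.factorial : ℝ) ≠ 0 := Nat.cast_ne_zero.mpr (Nat.factorial_ne_zero _)
  have n3 : (d.factorial : ℝ) ≠ 0 := Nat.cast_ne_zero.mpr (Nat.factorial_ne_zero _)
  have n4 : ((2 * μ + 1).factorial : ℝ) ≠ 0 := Nat.cast_ne_zero.mpr (Nat.factorial_ne_zero _)
  have n5 : ((2 * d + 1).factorial : ℝ) ≠ 0 := Nat.cast_ne_zero.mpr (Nat.factorial_ne_zero _)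
  have n6 : ((2 * (μ + d) + 1).factorial : ℝ) ≠ 0 := Nat.cast_ne_zero.mpr (Nat.factorial_ne_zero _)
  have hsq : Real.sqrt Real.pi ≠ 0 := ne_of_gt (Real.sqrt_pos.mpr Real.pi_pos)
  field_simp
  ring
end

section
/- For integers $0 \le \mu \le \nu$ and $j \ge 0$ with $j \ne \mu$ in the sense that $j-\mu-1/2 \ne 0$ automatically, one has $\binom{2\nu-\mu+1/2}{2\nu+1-j}\binom{j-\mu-3/2}{j} = \frac{(-1)^{\mu+1}}{j-\mu-1/2}\cdot 2^{-4\nu-2}\cdot\frac{(4\nu-2\mu+1)!\,(2\mu+1)!}{(2\nu-\mu)!\,\mu!\,j!\,(2\nu-j+1)!}$, where $j \le 2\nu+1$ so that all factorials are of nonnegative integers, and binomial coefficients with non-integral arguments are defined via the Gamma function. -/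
lemma half_ne_int (k : ℤ) : (k : ℝ) + 1/2 ≠ 0 := by
  intro h
  have : (2*k + 1 : ℝ) = 0 := by linarith
  have : (2*k + 1 : ℤ) = 0 := by exact_mod_cast this
  omega

lemma fact_step (n : ℕ) : (2*(n+1)).factorial = (2*n+2) * ((2*n+1) * (2*n).factorial) := by
  have e : 2*(n+1) = (2*n+1)+1 := by ring
  rw [e, Nat.factorial_succ, Nat.factorial_succ]

lemma Gamma_nat_add_half (n : ℕ) :
    Real.Gamma ((n : ℝ) + 1/2) = Real.sqrt Real.pi * (2*n).factorial / (4^n * n.factorial) := by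
  induction n with
  | zero =>
    simpa using Real.Gamma_one_half_eq
  | succ n ih =>
    have h1 : ((n+1 : ℕ) : ℝ) + 1/2 = ((n : ℝ) + 1/2) + 1 := by push_cast; ring
    have h2 : ((n : ℝ) + 1/2) ≠ 0 := by exact_mod_cast half_ne_int (n : ℤ)
    rw [h1, Real.Gamma_add_one h2, ih, fact_step]
    have h4 : (4:ℝ)^n ≠ 0 := by positivity
    have h5 : (n.factorial : ℝ) ≠ 0 := by exact_mod_cast n.factorial_ne_zero
    field_simp [Nat.factorial_succ]
    push_cast [Nat.factorial_succ]
    ring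

lemma Gamma_half_sub_nat (m : ℕ) :
    Real.Gamma (1/2 - (m : ℝ)) = Real.sqrt Real.pi * (-4)^m * m.factorial / (2*m).factorial := by
  induction m with
  | zero =>
    simpa using Real.Gamma_one_half_eq
  | succ m ih =>
    have hx : (1/2 - ((m+1 : ℕ) : ℝ)) ≠ 0 := by
      have := half_ne_int (-(m:ℤ)-1)
      push_cast at this ⊢
      intro h; apply this; linarith
    have h1 : (1/2 : ℝ) - (m : ℝ) = (1/2 - ((m+1 : ℕ):ℝ)) + 1 := by push_cast; ring
    have key : Real.Gamma (1/2 - ((m+1:ℕ):ℝ))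
        = Real.Gamma (1/2 - (m:ℝ)) / (1/2 - ((m+1:ℕ):ℝ)) := by
      rw [h1, Real.Gamma_add_one hx]
      exact (mul_div_cancel_left₀ _ hx).symm
    rw [key, ih, fact_step]
    have h5 : ((2*m).factorial : ℝ) ≠ 0 := by exact_mod_cast (2*m).factorial_ne_zero
    have h6 : (m.factorial : ℝ) ≠ 0 := by exact_mod_cast m.factorial_ne_zero
    push_cast [Nat.factorial_succ] at hx ⊢
    rw [div_eq_iff hx]
    field_simp
    ring

set_option maxHeartbeats 1600000 in
/-- For integers `0 ≤ μ ≤ ν` and `0 ≤ j ≤ 2ν+1`,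
`(2ν-μ+1/2 choose 2ν+1-j)(j-μ-3/2 choose j)
  = (-1)^{μ+1}/(j-μ-1/2) · 2^{-4ν-2} · (4ν-2μ+1)!(2μ+1)! / ((2ν-μ)! μ! j! (2ν-j+1)!)`. -/
theorem half_integer_binomial_product_identity (ν μ j : ℕ) (hμν : μ ≤ ν)
    (hj : j ≤ 2 * ν + 1) :
    gammaBinom (2 * (ν : ℝ) - (μ : ℝ) + 1 / 2) (2 * ν + 1 - j) *
        gammaBinom ((j : ℝ) - (μ : ℝ) - 3 / 2) j =
      (-1 : ℝ) ^ (μ + 1) / ((j : ℝ) - (μ : ℝ) - 1 / 2) * (2 : ℝ) ^ (-(4 * (ν : ℤ)) - 2) *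
        (((4 * ν - 2 * μ + 1).factorial : ℝ) * ((2 * μ + 1).factorial : ℝ)) /
          (((2 * ν - μ).factorial : ℝ) * (μ.factorial : ℝ) * (j.factorial : ℝ) *
            ((2 * ν + 1 - j).factorial : ℝ)) := by
  set N := 2 * ν + 1 - j with hNdef
  set m := 2 * ν - μ with hmdef
  have hμ2 : μ ≤ 2 * ν := by omega
  have hm : (m : ℝ) = 2 * (ν : ℝ) - (μ : ℝ) := by rw [hmdef]; push_cast [hμ2]; ring
  have hN : (N : ℝ) = 2 * (ν : ℝ) + 1 - (j : ℝ) := by rw [hNdef]; push_cast [hj]; ring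
  have hCne : (j : ℝ) - (μ : ℝ) - 1/2 ≠ 0 := by
    have := half_ne_int ((j : ℤ) - μ - 1)
    push_cast at this
    intro h; apply this; linarith
  have hCg : Real.Gamma ((j : ℝ) - (μ : ℝ) - 1/2) ≠ 0 := by
    refine Real.Gamma_ne_zero fun k => ?_
    have := half_ne_int ((j : ℤ) - μ - 1 + k)
    push_cast at this
    intro h; apply this; linarith
  unfold gammaBinom
  rw [show (2 * (ν:ℝ) - μ + 1/2 + 1) = ((m+1 : ℕ) : ℝ) + 1/2 by push_cast; linarith,
      show (2 * (ν:ℝ) - μ + 1/2 - (N:ℝ) + 1) = ((j:ℝ) - μ - 1/2) + 1 by rw [hN]; ring,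
      show ((j:ℝ) - μ - 3/2 + 1) = (j:ℝ) - μ - 1/2 by ring,
      show ((j:ℝ) - μ - 3/2 - (j:ℝ) + 1) = 1/2 - ((μ+1 : ℕ) : ℝ) by push_cast; ring,
      Real.Gamma_add_one hCne, Gamma_nat_add_half (m+1), Gamma_half_sub_nat (μ+1),
      Real.Gamma_nat_eq_factorial, Real.Gamma_nat_eq_factorial,
      show 4 * ν - 2 * μ + 1 = 2 * m + 1 by omega]
  have hfac1 : ((2*(m+1)).factorial : ℝ) = (2*(m:ℝ)+2) * ((2*m+1).factorial : ℝ) := by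
    rw [fact_step]
    push_cast [Nat.factorial_succ]
    ring
  have hfac2 : (((m+1)).factorial : ℝ) = ((m:ℝ)+1) * (m.factorial : ℝ) := by
    push_cast [Nat.factorial_succ]; ring
  have hfac3 : ((2*(μ+1)).factorial : ℝ) = (2*(μ:ℝ)+2) * ((2*μ+1).factorial : ℝ) := by
    rw [fact_step]
    push_cast [Nat.factorial_succ]
    ring
  have hfac4 : (((μ+1)).factorial : ℝ) = ((μ:ℝ)+1) * (μ.factorial : ℝ) := by
    push_cast [Nat.factorial_succ]; ring
  have hpow : (2:ℝ) ^ (-(4 * (ν:ℤ)) - 2) = 4 / ((4:ℝ)^(m+1) * (4:ℝ)^(μ+1)) := by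
    rw [← pow_add, show m+1+(μ+1) = 2*ν+2 by omega]
    have h1 : (2:ℝ) ^ (-(4 * (ν:ℤ)) - 2) = ((2:ℝ)^(4*ν+2 : ℕ))⁻¹ := by
      rw [← zpow_natCast (2:ℝ) (4*ν+2), ← zpow_neg]; congr 1; push_cast; ring
    have h2 : (4:ℝ)^(2*ν+2) = 4 * (2:ℝ)^(4*ν+2) := by
      rw [show (4:ℝ) = 2^2 by norm_num, ← pow_mul, show 2*(2*ν+2) = 2 + (4*ν+2) by ring,
        pow_add]
    rw [h1, h2]
    have : (2:ℝ)^(4*ν+2 : ℕ) ≠ 0 := by positivity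
    field_simp
  have hneg : ((-4:ℝ))^(μ+1) = (-1:ℝ)^(μ+1) * 4^(μ+1) := by
    rw [show (-4:ℝ) = -1*4 by norm_num, mul_pow]
  rw [hfac1, hfac2, hfac3, hfac4, hpow, hneg]
  have hsp : Real.sqrt Real.pi ≠ 0 := by positivity
  have e1 : ((2*m+1).factorial : ℝ) ≠ 0 := by exact_mod_cast (2*m+1).factorial_ne_zero
  have e2 : ((2*μ+1).factorial : ℝ) ≠ 0 := by exact_mod_cast (2*μ+1).factorial_ne_zero
  have e3 : (m.factorial : ℝ) ≠ 0 := by exact_mod_cast m.factorial_ne_zero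
  have e4 : (μ.factorial : ℝ) ≠ 0 := by exact_mod_cast μ.factorial_ne_zero
  have e5 : (j.factorial : ℝ) ≠ 0 := by exact_mod_cast j.factorial_ne_zero
  have e6 : (N.factorial : ℝ) ≠ 0 := by exact_mod_cast N.factorial_ne_zero
  have e7 : (4:ℝ)^(m+1) ≠ 0 := by positivity
  have e8 : (4:ℝ)^(μ+1) ≠ 0 := by positivity
  have e9 : ((m:ℝ)+1) ≠ 0 := by positivity
  have e10 : ((μ:ℝ)+1) ≠ 0 := by positivity
  have e11 : (2*(m:ℝ)+2) ≠ 0 := by positivity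
  have e12 : (2*(μ:ℝ)+2) ≠ 0 := by positivity
  set G := Real.Gamma ((j : ℝ) - (μ : ℝ) - 1/2) with hGdef
  set C := (j : ℝ) - (μ : ℝ) - 1/2 with hCdef
  field_simp [hCne, hCg, hsp, e1, e2, e3, e4, e5, e6, e7, e8]
  have hone : ((-1:ℝ))^(μ*2) = 1 := Even.neg_one_pow ⟨μ, by ring⟩
  ring_nf
  simp only [hone, one_mul, mul_one]
end

section
/- For integers $\nu \ge 1$ and $j \ge 0$ with $j \le \nu+1$, one has $\sum_{\mu=0}^{\nu}\frac{(-1)^\mu}{\mu-j+1/2}\cdot\frac{(4\nu-2\mu+1)!}{(2\nu-\mu)!\,\mu!\,(2\nu-2\mu+1)!} = 2^{4\nu+2}(-1)^j\frac{(2\nu-j+1)!\,j!}{(2j)!\,(2\nu-2j+2)!}$. -/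
open Finset Polynomial

lemma neg_one_pow_sub (a b : ℕ) (h : b ≤ a) : (-1:ℝ)^(a-b) = (-1)^a * (-1)^b := by
  have h1 : (-1:ℝ)^(a-b) * (-1)^b = (-1)^a := by
    rw [← pow_add]; congr 1; omega
  have h2 : (-1:ℝ)^b * (-1)^b = 1 := by
    rw [← pow_add, ← two_mul, pow_mul]; norm_num
  calc (-1:ℝ)^(a-b) = (-1:ℝ)^(a-b) * ((-1)^b * (-1)^b) := by rw [h2, mul_one]
    _ = (-1)^a * (-1)^b := by rw [← mul_assoc, h1]

lemma prod_half (n : ℕ) :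
    (4:ℝ)^n * n.factorial * ∏ i ∈ range n, ((i:ℝ) + 1/2) = (2*n).factorial := by
  induction n with
  | zero => simp
  | succ n ih =>
    rw [prod_range_succ]
    have h2 : 2*(n+1) = (2*n+1)+1 := by ring
    rw [h2]
    simp only [Nat.factorial_succ]
    push_cast
    linear_combination ((2*(n:ℝ)+2)*(2*n+1)) * ih

lemma prod_asc (a n : ℕ) :
    (a.factorial : ℝ) * ∏ i ∈ range n, ((a:ℝ) + 1 + i) = (a+n).factorial := by
  induction n with
  | zero => simp
  | succ n ih =>
    rw [prod_range_succ]
    have : a + (n+1) = (a+n)+1 := by ring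
    rw [this]
    simp only [Nat.factorial_succ]
    push_cast
    nlinarith [ih]

lemma prod_odd (m n : ℕ) :
    ((2*m+1).factorial : ℝ) * (m+n).factorial * 2^n * ∏ i ∈ range n, (2*((m:ℝ)+i)+3)
      = ((2*(m+n)+1).factorial : ℝ) * m.factorial := by
  induction n with
  | zero => simp
  | succ n ih =>
    rw [prod_range_succ]
    have h1 : m + (n+1) = (m+n)+1 := by ring
    have h2 : 2*(m+n+1)+1 = ((2*(m+n)+1)+1)+1 := by ring
    rw [h1, h2]
    simp only [Nat.factorial_succ] at ih ⊢
    push_cast at ih ⊢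
    linear_combination ((2*((m:ℝ)+n)+3)*(2*((m:ℝ)+n)+2)) * ih

lemma prod_desc (m n : ℕ) (h : n ≤ m) :
    ((m-n).factorial : ℝ) * ∏ i ∈ range n, ((m:ℝ) - i) = m.factorial := by
  induction n with
  | zero => simp
  | succ n ih =>
    rw [prod_range_succ]
    have hn : n ≤ m := by omega
    have h1 : m - n = (m - (n+1)) + 1 := by omega
    have h2 : ((m:ℝ) - n) = ((m - (n+1) : ℕ) : ℝ) + 1 := by
      push_cast [Nat.cast_sub (by omega : n+1 ≤ m)]; ring
    rw [← ih hn, h1, Nat.factorial_succ, h2]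
    push_cast
    ring

lemma prod_range_nat_fact (n : ℕ) : ∏ i ∈ range n, ((i:ℝ) + 1) = n.factorial := by
  induction n with
  | zero => simp
  | succ n ih => rw [prod_range_succ, ih, Nat.factorial_succ]; push_cast; ring

lemma erase_range_eq (n μ : ℕ) (h : μ < n) :
    (range n).erase μ = range μ ∪ Ico (μ+1) n := by
  ext a
  simp only [mem_erase, mem_range, mem_union, mem_Ico]
  omega

lemma prod_erase_sub (n μ : ℕ) (h : μ < n) :
    ∏ l ∈ (range n).erase μ, ((μ:ℝ) - l)
      = (-1)^(n-1-μ) * μ.factorial * (n-1-μ).factorial := by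
  rw [erase_range_eq n μ h, prod_union (by simp [Finset.disjoint_left]; omega)]
  have h1 : ∏ l ∈ range μ, ((μ:ℝ) - l) = μ.factorial := by
    have := prod_desc μ μ le_rfl
    simpa using this
  have h2 : ∏ l ∈ Ico (μ+1) n, ((μ:ℝ) - l) = (-1)^(n-1-μ) * (n-1-μ).factorial := by
    rw [prod_Ico_eq_prod_range]
    have hc : ∀ i ∈ range (n - (μ+1)), ((μ:ℝ) - ((μ+1+i : ℕ) : ℝ)) = (-1) * ((i:ℝ)+1) := by
      intro i _; push_cast; ring
    rw [prod_congr rfl hc, prod_mul_distrib, prod_const, prod_range_nat_fact]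
    simp only [card_range]
    rw [show n - (μ+1) = n-1-μ from by omega]
  rw [h1, h2]; ring

lemma term_alg (ε δ η s p q A B C jv P : ℝ)
    (hsign : δ*η = ε) (hjv : jv ≠ 0) (hp : p ≠ 0) (hq : q ≠ 0) (hB : B ≠ 0) (hC : C ≠ 0)
    (hs : s ≠ 0) :
    ε / (-jv) * (A/(B*p*C)) * (jv*P) = -(s*s * (δ * (A*q/(C*B*s)/s)) * (η * (p*q)⁻¹ * P)) := by
  subst hsign
  field_simp

lemma endgame_alg (ε γ δ t u w a b c d F P1 P2 Qj : ℝ)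
    (hsign : ε*γ = -δ) (huw : u*w = 4*t)
    (ha : a ≠ 0) (hb : b ≠ 0) (hc : c ≠ 0) (hd : d ≠ 0) (hu : u ≠ 0) (hw : w ≠ 0)
    (ht : t ≠ 0)
    (hP1 : u*c*P1 = a) (hP2 : w*d*P2 = γ*b) (hQ : d*Qj = t*δ*F) :
    4*t*t*ε*(F*c)/(a*b) * (P1*P2) = -Qj := by
  have hδ : δ = -(ε*γ) := by linarith
  subst hδ
  have hP1' : P1 = a/(u*c) := by rw [eq_div_iff (mul_ne_zero hu hc)]; linarith
  have hP2' : P2 = γ*b/(w*d) := by rw [eq_div_iff (mul_ne_zero hw hd)]; linarith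
  have hQ' : Qj = -(t*(ε*γ))*F/d := by rw [eq_div_iff hd]; linarith
  have hw2 : w = 4*t/u := by rw [eq_div_iff hu]; linarith
  subst hw2
  rw [hP1', hP2', hQ']
  field_simp

/-- For integers `ν ≥ 1` and `0 ≤ j ≤ ν+1`,
`∑_{μ=0}^{ν} (-1)^μ/(μ-j+1/2) · (4ν-2μ+1)!/((2ν-μ)! μ! (2ν-2μ+1)!)
  = 2^{4ν+2} (-1)^j (2ν-j+1)! j! / ((2j)! (2ν-2j+2)!)`. -/
theorem multinomial_alternating_sum (ν j : ℕ) (hν : 1 ≤ ν) (hj : j ≤ ν + 1) :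
    ∑ μ ∈ Finset.range (ν + 1),
      (-1 : ℝ) ^ μ / ((μ : ℝ) - (j : ℝ) + 1 / 2) *
        (((4 * ν - 2 * μ + 1).factorial : ℝ) /
          (((2 * ν - μ).factorial : ℝ) * (μ.factorial : ℝ) *
            ((2 * ν - 2 * μ + 1).factorial : ℝ))) =
      2 ^ (4 * ν + 2) * (-1 : ℝ) ^ j *
        (((2 * ν + 1 - j).factorial : ℝ) * (j.factorial : ℝ)) /
          (((2 * j).factorial : ℝ) * ((2 * ν + 2 - 2 * j).factorial : ℝ)) := by
  classical
  set v : ℕ → ℝ := fun μ => (μ:ℝ) + 1/2 with hv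
  have hinj : Set.InjOn v (range (ν+1)) := by
    intro a _ b _ hab
    have : (a:ℝ) = b := by simpa [hv] using hab
    exact_mod_cast this
  set Q : Polynomial ℝ := Polynomial.C ((4:ℝ)^ν) * ∏ i ∈ range ν, (X - C ((ν:ℝ)+2+i)) with hQ
  have hQeval : ∀ x : ℝ, Q.eval x = 4^ν * ∏ i ∈ range ν, (x - ((ν:ℝ)+2+i)) := by
    intro x; simp [hQ, eval_prod]
  have hdeg : Q.degree < ((range (ν+1)).card : ℕ) := by
    have h4 : ((4:ℝ)^ν) ≠ 0 := by positivity
    have hdQ : Q.degree = ν := by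
      rw [hQ, degree_mul, degree_C h4, zero_add, degree_prod]
      simp only [degree_X_sub_C]
      simp
    rw [hdQ, card_range]
    exact_mod_cast Nat.lt_succ_self ν
  have key := Lagrange.eq_interpolate hinj hdeg
  have key' : Q.eval (j:ℝ) = ∑ μ ∈ range (ν+1),
      Q.eval (v μ) * (Lagrange.basis (range (ν+1)) v μ).eval (j:ℝ) := by
    conv_lhs => rw [key]
    simp [Lagrange.interpolate_apply, eval_finset_sum]
  -- nonvanishing at nodes
  have hvne : ∀ l : ℕ, (j:ℝ) - v l ≠ 0 := by
    intro l h
    have h2 : ((2*j:ℕ) : ℝ) = ((2*l+1 : ℕ) : ℝ) := by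
      push_cast; simp only [hv] at h; linarith
    have := Nat.cast_injective (R := ℝ) h2
    omega
  set D : ℝ := ∏ l ∈ range (ν+1), ((j:ℝ) - v l) with hD
  have hDne : D ≠ 0 := prod_ne_zero_iff.mpr (fun l _ => hvne l)
  -- per-term identity
  have hterm : ∀ μ ∈ range (ν+1),
      (-1 : ℝ) ^ μ / ((μ : ℝ) - (j : ℝ) + 1 / 2) *
        (((4 * ν - 2 * μ + 1).factorial : ℝ) /
          (((2 * ν - μ).factorial : ℝ) * (μ.factorial : ℝ) *
            ((2 * ν - 2 * μ + 1).factorial : ℝ))) * D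
      = -(Q.eval (v μ) * (Lagrange.basis (range (ν+1)) v μ).eval (j:ℝ)) := by
    intro μ hμ
    have hμν : μ ≤ ν := by have := mem_range.mp hμ; omega
    set m : ℕ := ν - μ with hm
    -- coefficient identity
    have hE : ∏ l ∈ (range (ν+1)).erase μ, (v μ - v l)
        = (-1)^m * μ.factorial * m.factorial := by
      have h0 : ∀ l ∈ (range (ν+1)).erase μ, v μ - v l = (μ:ℝ) - l := by
        intro l _; simp only [hv]; ring
      rw [prod_congr rfl h0]
      have := prod_erase_sub (ν+1) μ (by omega)
      simpa [show ν+1-1-μ = m from by omega] using this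
    have hfne : ∀ n : ℕ, ((n.factorial : ℝ)) ≠ 0 := fun n =>
      Nat.cast_ne_zero.mpr (Nat.factorial_ne_zero n)
    have hEne : ∏ l ∈ (range (ν+1)).erase μ, (v μ - v l) ≠ 0 := by
      rw [hE]
      exact mul_ne_zero (mul_ne_zero (pow_ne_zero _ (by norm_num)) (hfne μ)) (hfne m)
    have hbasis : (Lagrange.basis (range (ν+1)) v μ).eval (j:ℝ)
        = (∏ l ∈ (range (ν+1)).erase μ, (v μ - v l))⁻¹
          * ∏ l ∈ (range (ν+1)).erase μ, ((j:ℝ) - v l) := by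
      simp [Lagrange.basis, Lagrange.basisDivisor, eval_prod, prod_mul_distrib]
    have hP : ((j:ℝ) - v μ) * ∏ l ∈ (range (ν+1)).erase μ, ((j:ℝ) - v l) = D := by
      rw [hD]; exact Finset.mul_prod_erase (range (ν+1)) (fun l => (j:ℝ) - v l) hμ
    -- value of Q at node
    have e1 : 2*(m+ν)+1 = 4*ν-2*μ+1 := by omega
    have e2 : m+ν = 2*ν-μ := by omega
    have e3 : 2*m+1 = 2*ν-2*μ+1 := by omega
    have hpo := prod_odd m ν
    rw [e1, e2, e3] at hpo
    have hfac : ∀ i ∈ range ν, (v μ - ((ν:ℝ)+2+i)) = (-1)*((2*((m:ℝ)+i)+3)/2) := by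
      intro i _
      simp only [hv]
      have : ((m:ℕ):ℝ) = (ν:ℝ) - μ := by
        rw [hm]; push_cast [Nat.cast_sub hμν]; ring
      rw [this]; ring
    have hQv : Q.eval (v μ) = 4^ν * ((-1)^ν * ((∏ i ∈ range ν, (2*((m:ℝ)+i)+3)) / 2^ν)) := by
      rw [hQeval, prod_congr rfl hfac, prod_mul_distrib, prod_const, prod_div_distrib, prod_const,
        card_range]
    have hsign : (-1:ℝ)^μ * (-1)^m = (-1)^ν := by
      rw [← pow_add]; congr 1; omega
    have h4 : (4:ℝ)^ν = 2^ν * 2^ν := by rw [← mul_pow]; norm_num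
    have h2ne : ((2:ℝ)^ν) ≠ 0 := by positivity
    have hprodval : ∏ i ∈ range ν, (2*((m:ℝ)+i)+3)
        = ((4*ν-2*μ+1).factorial : ℝ) * m.factorial
          / (((2*ν-2*μ+1).factorial : ℝ) * (2*ν-μ).factorial * 2^ν) := by
      rw [eq_div_iff (by positivity)]
      linarith [hpo]
    have hμj : (μ:ℝ) - (j:ℝ) + 1/2 = -((j:ℝ) - v μ) := by simp only [hv]; ring
    have hsign2 : (-1:ℝ)^ν * (-1)^m = (-1)^μ := by
      rw [← pow_add, show ν+m = μ+2*(ν-μ) from by omega, pow_add, pow_mul]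
      norm_num
    have hEinv : (∏ l ∈ (range (ν+1)).erase μ, (v μ - v l))⁻¹
        = (-1)^m * ((μ.factorial:ℝ) * m.factorial)⁻¹ := by
      rw [hE, show ((-1:ℝ)^m * ↑μ.factorial * ↑m.factorial)
            = (-1)^m * ((μ.factorial:ℝ) * m.factorial) from by ring, mul_inv]
      congr 1
      rw [← inv_pow]
      norm_num
    have hQv2 : Q.eval (v μ) = 2^ν*2^ν * ((-1)^ν *
        (((4*ν-2*μ+1).factorial : ℝ) * m.factorial
          / (((2*ν-2*μ+1).factorial : ℝ) * (2*ν-μ).factorial * 2^ν) / 2^ν)) := by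
      rw [hQv, hprodval, h4]
    rw [hμj, ← hP, hbasis, hEinv, hQv2]
    exact term_alg ((-1)^μ) ((-1)^ν) ((-1)^m) (2^ν) _ _ _ _ _ _ _ hsign2 (hvne μ)
      (hfne μ) (hfne m) (hfne _) (hfne _) h2ne
  -- sum identity
  have hsum : (∑ μ ∈ Finset.range (ν + 1),
      (-1 : ℝ) ^ μ / ((μ : ℝ) - (j : ℝ) + 1 / 2) *
        (((4 * ν - 2 * μ + 1).factorial : ℝ) /
          (((2 * ν - μ).factorial : ℝ) * (μ.factorial : ℝ) *
            ((2 * ν - 2 * μ + 1).factorial : ℝ)))) * D = -(Q.eval (j:ℝ)) := by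
    rw [Finset.sum_mul, key', ← Finset.sum_neg_distrib]
    exact Finset.sum_congr rfl hterm
  -- endgame
  set k : ℕ := ν + 1 - j with hk
  have hfne : ∀ n : ℕ, ((n.factorial : ℝ)) ≠ 0 := fun n =>
    Nat.cast_ne_zero.mpr (Nat.factorial_ne_zero n)
  -- value of Q at j
  have hQj : (k.factorial : ℝ) * Q.eval (j:ℝ) = 4^ν * (-1)^ν * ((2*ν+1-j).factorial : ℝ) := by
    have hfac : ∀ i ∈ range ν, ((j:ℝ) - ((ν:ℝ)+2+i)) = (-1)*(((k:ℕ):ℝ)+1+i) := by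
      intro i _
      have : ((k:ℕ):ℝ) = (ν:ℝ) + 1 - j := by
        rw [hk]; push_cast [Nat.cast_sub hj]; ring
      rw [this]; ring
    have := prod_asc k ν
    rw [hQeval, prod_congr rfl hfac, prod_mul_distrib, prod_const, card_range]
    rw [show k + ν = 2*ν+1-j from by omega] at this
    linear_combination (4:ℝ)^ν * (-1)^ν * this
  -- value of D
  have hP1 : (4:ℝ)^j * j.factorial * ∏ l ∈ range j, ((j:ℝ) - v l) = ((2*j).factorial : ℝ) := by
    have hrefl := Finset.prod_range_reflect (fun i => (i:ℝ) + 1/2) j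
    have hc : ∀ l ∈ range j, ((j:ℝ) - v l) = ((j-1-l : ℕ):ℝ) + 1/2 := by
      intro l hl
      have hl' := mem_range.mp hl
      simp only [hv]
      push_cast [Nat.cast_sub (show 1 ≤ j by omega), Nat.cast_sub (show l ≤ j - 1 by omega)]
      ring
    rw [prod_congr rfl hc, hrefl]
    exact prod_half j
  have hP2 : (4:ℝ)^k * k.factorial * ∏ l ∈ Ico j (ν+1), ((j:ℝ) - v l)
      = (-1)^k * ((2*k).factorial : ℝ) := by
    rw [prod_Ico_eq_prod_range]
    have hc : ∀ i ∈ range (ν+1-j), ((j:ℝ) - v (j+i)) = (-1) * ((i:ℝ) + 1/2) := by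
      intro i _; simp only [hv]; push_cast; ring
    rw [prod_congr rfl hc, prod_mul_distrib, prod_const, card_range, ← hk]
    linear_combination (-1:ℝ)^k * prod_half k
  have hDsplit : D = (∏ l ∈ range j, ((j:ℝ) - v l)) * ∏ l ∈ Ico j (ν+1), ((j:ℝ) - v l) := by
    rw [hD, range_eq_Ico, ← Finset.prod_Ico_consecutive _ (Nat.zero_le j) hj, ← range_eq_Ico]
  -- final computation
  have hsignjk : (-1:ℝ)^j * (-1)^k = -(-1)^ν := by
    rw [← pow_add, show j+k = ν+1 from by omega, pow_succ]
    ring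
  have huw : (4:ℝ)^j * 4^k = 4*4^ν := by
    rw [← pow_add, show j+k = ν+1 from by omega, pow_succ]
    ring
  have h24' : (2:ℝ)^(4*ν+2) = 4*4^ν*4^ν := by
    rw [show 4*ν+2 = 2+2*ν+2*ν from by omega, pow_add, pow_add, pow_mul]
    norm_num
  have hP1ne : ((4:ℝ)^j) ≠ 0 := by positivity
  have hP2ne : ((4:ℝ)^k) ≠ 0 := by positivity
  have h4nne : ((4:ℝ)^ν) ≠ 0 := by positivity
  refine mul_right_cancel₀ hDne ?_
  rw [hsum, hDsplit, show 2*ν+2-2*j = 2*k from by omega,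
    show (2:ℝ)^(4*ν+2) * (-1)^j = 4*(4:ℝ)^ν*4^ν*(-1)^j from by rw [h24']]
  exact (endgame_alg ((-1)^j) ((-1)^k) ((-1)^ν) (4^ν) (4^j) (4^k) _ _ _ _ _ _ _ _
    hsignjk huw (hfne _) (hfne _) (hfne _) (hfne _) hP1ne hP2ne h4nne hP1 hP2 hQj).symm
end

section
/- Let $a\ge 2$ be an integer and $b$ a real number with $b\ne 1,2$. Define $P_{a,b}(X,Y):=\sum_{j=0}^{a-2}\binom{j+b-2}{j}X^j(X+Y)^{a-j-2}$. Then $P_{a,b}(X,Y)=\sum_{j=0}^{a-2}\binom{a+b-3}{a-2-j}\binom{j+b-2}{j}(X+Y)^{a-2-j}(-Y)^j$ as polynomials in $X,Y$. -/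
/-- The binomial coefficient `x choose k` for real `x` and natural `k`,
defined as `x(x-1)⋯(x-k+1)/k!`. -/
noncomputable def realBinom (x : ℝ) (k : ℕ) : ℝ :=
  (∏ i ∈ Finset.range k, (x - (i : ℝ))) / (k.factorial : ℝ)

open Finset

lemma prod_shift (x : ℝ) (k : ℕ) :
    ∏ i ∈ range (k+1), (x - (i:ℝ)) = x * ∏ i ∈ range k, (x - 1 - (i:ℝ)) := by
  rw [prod_range_succ' (fun i => x - (i:ℝ))]
  push_cast
  ring_nf

lemma realBinom_pascal (x : ℝ) (k : ℕ) :
    realBinom x k + realBinom x (k+1) = realBinom (x+1) (k+1) := by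
  unfold realBinom
  have h1 : ∏ i ∈ range (k+1), (x + 1 - (i:ℝ)) = (x+1) * ∏ i ∈ range k, (x - (i:ℝ)) := by
    have := prod_shift (x+1) k
    simpa using this
  have h2 : ∏ i ∈ range (k+1), (x - (i:ℝ)) = (∏ i ∈ range k, (x - (i:ℝ))) * (x - k) :=
    prod_range_succ _ k
  rw [h1, h2, Nat.factorial_succ]
  have hk : (k.factorial : ℝ) ≠ 0 := Nat.cast_ne_zero.2 k.factorial_ne_zero
  have hk1 : ((k+1 : ℕ) : ℝ) ≠ 0 := by positivity
  push_cast
  field_simp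
  ring

lemma realBinom_zero (x : ℝ) : realBinom x 0 = 1 := by simp [realBinom]

lemma realBinom_mul_choose (x : ℝ) {k j : ℕ} (h : k ≤ j) :
    realBinom x j * (j.choose k : ℝ)
      = realBinom x (j-k) * realBinom (x - ((j-k : ℕ) : ℝ)) k := by
  obtain ⟨m, rfl⟩ : ∃ m, j = m + k := ⟨j - k, by omega⟩
  have hmk : m + k - k = m := by omega
  rw [hmk]
  unfold realBinom
  have hsplit : ∏ i ∈ range (m+k), (x - (i:ℝ))
      = (∏ i ∈ range m, (x - (i:ℝ))) * ∏ i ∈ range k, (x - (m:ℝ) - (i:ℝ)) := by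
    rw [prod_range_add]
    congr 1
    apply prod_congr rfl; intro i _; push_cast; ring
  have hfact : ((m+k).factorial : ℝ) = ((m+k).choose k : ℝ) * k.factorial * m.factorial := by
    have := Nat.choose_mul_factorial_mul_factorial (n := m+k) (k := k) (by omega)
    rw [show m + k - k = m by omega] at this
    exact_mod_cast this.symm
  rw [hsplit, hfact]
  have h1 : (m.factorial : ℝ) ≠ 0 := Nat.cast_ne_zero.2 m.factorial_ne_zero
  have h2 : (k.factorial : ℝ) ≠ 0 := Nat.cast_ne_zero.2 k.factorial_ne_zero
  have h3 : ((m+k).choose k : ℝ) ≠ 0 := Nat.cast_ne_zero.2 (Nat.choose_pos (by omega) |>.ne')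
  field_simp

lemma hockey (b : ℝ) (k : ℕ) : ∀ n, k ≤ n →
    ∑ j ∈ Finset.Ico k (n+1), realBinom ((j:ℝ) + b - 2) j * (j.choose k : ℝ)
      = realBinom ((n:ℝ) + b - 1) (n-k) * realBinom ((k:ℝ) + b - 2) k := by
  intro n
  induction n with
  | zero =>
    intro hk
    interval_cases k
    simp [realBinom_zero]
  | succ n ih =>
    intro hk
    rcases Nat.lt_or_ge n k with h | h
    · -- k = n+1
      have hk' : k = n + 1 := by omega
      subst hk'
      rw [Finset.sum_Ico_eq_sum_range]
      simp [realBinom_zero]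
    · rw [Finset.sum_Ico_succ_top (by omega), ih h]
      have hc : ((n:ℝ) + 1 + b - 2) = (n:ℝ) + b - 1 := by ring
      rw [show (((n+1:ℕ)):ℝ) = (n:ℝ)+1 by push_cast; ring] at *
      rw [hc]
      have htri := realBinom_mul_choose ((n:ℝ) + b - 1) (k := k) (j := n+1) (by omega)
      have hsub : ((n+1-k : ℕ) : ℝ) = (n:ℝ) + 1 - k := by
        push_cast [Nat.cast_sub (by omega : k ≤ n+1)]; ring
      rw [hsub] at htri
      rw [htri]
      rw [show (n:ℝ) + b - 1 - ((n:ℝ) + 1 - k) = (k:ℝ) + b - 2 by ring]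
      have hpas := realBinom_pascal ((n:ℝ) + b - 1) (n - k)
      rw [show n - k + 1 = n + 1 - k by omega] at hpas
      rw [show (n:ℝ) + b - 1 + 1 = (n:ℝ) + 1 + b - 1 by ring] at hpas
      rw [← hpas]
      ring


/-- The polynomial `P_{a,b}(X,Y) = ∑_{j=0}^{a-2} (j+b-2 choose j) X^j (X+Y)^{a-j-2}`. -/
noncomputable def Pab (a : ℕ) (b : ℝ) (X Y : ℝ) : ℝ :=
  ∑ j ∈ Finset.range (a - 1), realBinom ((j : ℝ) + b - 2) j * X ^ j * (X + Y) ^ (a - j - 2)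

/-- Mertens' identity: for an integer `a ≥ 2` and a real `b ≠ 1, 2`,
`P_{a,b}(X,Y) = ∑_{j=0}^{a-2} (a+b-3 choose a-2-j)(j+b-2 choose j)(X+Y)^{a-2-j}(-Y)^j`. -/
theorem Pab_identity (a : ℕ) (ha : 2 ≤ a) (b : ℝ) (hb1 : b ≠ 1) (hb2 : b ≠ 2) (X Y : ℝ) :
    Pab a b X Y =
      ∑ j ∈ Finset.range (a - 1),
        realBinom ((a : ℝ) + b - 3) (a - 2 - j) * realBinom ((j : ℝ) + b - 2) j *
          (X + Y) ^ (a - 2 - j) * (-Y) ^ j := by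
  obtain ⟨n, rfl⟩ : ∃ n, a = n + 2 := ⟨a - 2, by omega⟩
  set S := X + Y with hS
  set T := -Y with hT
  have hXST : X = S + T := by rw [hS, hT]; ring
  have hr : n + 2 - 1 = n + 1 := rfl
  unfold Pab
  rw [hr]
  -- expand LHS into a double sum
  have step1 : ∀ j ∈ Finset.range (n+1),
      realBinom ((j:ℝ) + b - 2) j * X ^ j * (X + Y) ^ (n + 2 - j - 2)
        = ∑ i ∈ Finset.range (j+1),
            realBinom ((j:ℝ) + b - 2) j * (j.choose i : ℝ) * S ^ (n-i) * T ^ i := by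
    intro j hj
    rw [Finset.mem_range] at hj
    have hjn : j ≤ n := by omega
    rw [hXST, add_pow, show n + 2 - j - 2 = n - j by omega, show S + T + Y = S by rw [hT]; ring]
    rw [Finset.mul_sum, Finset.sum_mul]
    rw [← Finset.sum_range_reflect]
    apply Finset.sum_congr rfl
    intro i hi
    rw [Finset.mem_range] at hi
    have hij : i ≤ j := by omega
    rw [show j + 1 - 1 - i = j - i by omega, show j - (j - i) = i by omega,
      Nat.choose_symm hij]
    rw [show n - i = n - j + (j - i) by omega, pow_add]
    ring
  rw [Finset.sum_congr rfl step1]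
  -- swap the double sum
  have hswap := Finset.sum_Ico_Ico_comm 0 (n+1)
    (fun i j => realBinom ((j:ℝ) + b - 2) j * (j.choose i : ℝ) * S ^ (n-i) * T ^ i)
  simp only [← Finset.range_eq_Ico] at hswap
  rw [← hswap]
  -- evaluate inner sums via the hockey stick identity
  apply Finset.sum_congr rfl
  intro i hi
  rw [Finset.mem_range] at hi
  have hin : i ≤ n := by omega
  have hh := hockey b i (n) hin
  calc ∑ j ∈ Finset.Ico i (n+1),
        realBinom ((j:ℝ) + b - 2) j * (j.choose i : ℝ) * S ^ (n-i) * T ^ i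
      = (∑ j ∈ Finset.Ico i (n+1),
          realBinom ((j:ℝ) + b - 2) j * (j.choose i : ℝ)) * S ^ (n-i) * T ^ i := by
        rw [Finset.sum_mul, Finset.sum_mul]
    _ = realBinom (((n+2:ℕ):ℝ) + b - 3) (n + 2 - 2 - i) * realBinom ((i:ℝ) + b - 2) i *
          S ^ (n + 2 - 2 - i) * T ^ i := by
        rw [hh, show (((n+2:ℕ)):ℝ) + b - 3 = (n:ℝ) + b - 1 by push_cast; ring,
          show n + 2 - 2 - i = n - i by omega]
end

section
/- Let $q$ be an odd prime power with $q\equiv 3\pmod 4$, and let $\phi$ be the quadratic character of $\mathbb{F}_q$. For $\lambda\in\mathbb{F}_q\setminus\{0,1\}$ define $a_\lambda := -\sum_{x\in\mathbb{F}_q}\phi(x(x-1)(x-\lambda))$. Then $a_\lambda = -a_{1-\lambda}$; consequently $\sum_{\lambda\in\mathbb{F}_q\setminus\{0,1\}} a_\lambda^{m}=0$ for every odd positive integer $m$. -/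
/-- Let `F = 𝔽_q` with `q ≡ 3 (mod 4)` and `φ` the quadratic character. For
`λ ∉ {0,1}`, the Legendre trace `a_λ = -∑_x φ(x(x-1)(x-λ))` satisfies
`a_λ = -a_{1-λ}`; consequently `∑_{λ ≠ 0,1} a_λ^m = 0` for every odd positive `m`. -/
theorem legendre_odd_moments_vanish (F : Type*) [Field F] [Fintype F] [DecidableEq F]
    (hq : Fintype.card F % 4 = 3)
    (a : F → ℤ)
    (ha : ∀ lam : F, a lam = -∑ x : F, quadraticChar F (x * (x - 1) * (x - lam))) :
    (∀ lam : F, lam ≠ 0 → lam ≠ 1 → a lam = -a (1 - lam)) ∧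
      ∀ m : ℕ, Odd m → 0 < m →
        ∑ lam ∈ (Finset.univ \ {0, 1} : Finset F), a lam ^ m = 0 := by
  have hneg1 : quadraticChar F (-1) = -1 := by
    rw [quadraticChar_neg_one_iff_not_isSquare, FiniteField.isSquare_neg_one_iff, hq]
    simp
  have key : ∀ lam : F, a lam = -a (1 - lam) := by
    intro lam
    rw [ha lam, ha (1 - lam), neg_neg, ← Finset.sum_neg_distrib]
    refine Fintype.sum_equiv (Equiv.subLeft 1) _ _ fun x => ?_
    rw [Equiv.subLeft_apply,
      show (1 - x) * ((1 - x) - 1) * ((1 - x) - (1 - lam)) =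
        (-1) * (x * (x - 1) * (x - lam)) from by ring,
      map_mul (quadraticChar F) (-1) (x * (x - 1) * (x - lam)), hneg1, neg_one_mul]
  refine ⟨fun lam _ _ => key lam, fun m hm _ => ?_⟩
  refine Finset.sum_involution (fun lam _ => 1 - lam) (fun lam _ => ?_)
    (fun lam _ hne heq => ?_) (fun lam hlam => ?_) (fun lam _ => by ring)
  · rw [key lam, hm.neg_pow]; ring
  · apply hne
    have h0 : a lam = 0 := by have := key lam; rw [show (1:F) - lam = lam from heq] at this; omega
    rw [h0, zero_pow hm.pos.ne']
  · simp only [Finset.mem_sdiff, Finset.mem_insert, Finset.mem_singleton, Finset.mem_univ,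
      true_and, not_or] at hlam ⊢
    exact ⟨fun h => hlam.2 (by linear_combination -h), fun h => hlam.1 (by linear_combination -h)⟩
end

section
/- Let $q$ be an odd prime power with $q\equiv 1\pmod 4$ and let $E/\mathbb{F}_q$ be the elliptic curve $y^2=x(x-\alpha)(x-\beta)$ where $\alpha$, $\beta$, and $\alpha-\beta$ are all nonsquares in $\mathbb{F}_q^\times$. Then $|E(\mathbb{F}_q)|\not\equiv 0\pmod 8$. -/
lemma aux_two_torsion {G : Type*} [AddCommGroup G] [Finite G]
    (h8 : 8 ∣ Nat.card G)
    (h4 : Nat.card {g : G // g + g = 0} ≤ 4)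
    (hnd : ∀ g : G, (g + g) + (g + g) = 0 → g + g = 0) : False := by
  classical
  let φ : G →+ G := AddMonoidHom.mk' (fun g => g + g) (by intro a b; abel_nf)
  have hφ : ∀ g, φ g = g + g := fun _ => rfl
  have hker : Nat.card φ.ker ≤ 4 := by
    refine le_trans (le_of_eq (Nat.card_congr ?_)) h4
    exact Equiv.subtypeEquivRight fun g => by simp [AddMonoidHom.mem_ker, hφ]
  have hodd : ¬ (2 ∣ Nat.card φ.range) := by
    intro h2
    cases nonempty_fintype (φ.range)
    rw [Nat.card_eq_fintype_card] at h2
    obtain ⟨x, hx⟩ := exists_prime_addOrderOf_dvd_card (G := φ.range) 2 h2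
    have hxx : x + x = 0 := by
      have h := addOrderOf_nsmul_eq_zero x
      rwa [hx, two_nsmul] at h
    obtain ⟨g, hg⟩ := x.2
    have : (g + g) + (g + g) = 0 := by
      have := congrArg (Subtype.val) hxx
      push_cast at this
      rw [← hg] at this
      simpa [hφ] using this
    have h0 : g + g = 0 := hnd g this
    have : x = 0 := by
      ext
      rw [← hg]
      simpa [hφ] using h0
    rw [this, addOrderOf_zero] at hx
    norm_num at hx
  have hq := AddSubgroup.card_eq_card_quotient_mul_card_addSubgroup φ.ker
  have hqr : Nat.card (G ⧸ φ.ker) = Nat.card φ.range :=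
    Nat.card_congr (QuotientAddGroup.quotientKerEquivRange φ).toEquiv
  rw [hq, hqr] at h8
  have hco : Nat.Coprime 8 (Nat.card φ.range) := by
    have : Nat.Coprime 2 (Nat.card φ.range) :=
      (Nat.Prime.coprime_iff_not_dvd Nat.prime_two).mpr hodd
    exact Nat.Coprime.pow_left 3 this
  have h8k : 8 ∣ Nat.card φ.ker := (Nat.Coprime.dvd_of_dvd_mul_left hco h8)
  have hpos : 0 < Nat.card φ.ker := Nat.card_pos
  omega

open WeierstrassCurve.Affine WeierstrassCurve.Affine.Point

set_option maxHeartbeats 1000000 in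
/-- Let `q ≡ 1 (mod 4)` with characteristic `≥ 5`, and let `E : y² = x(x-α)(x-β)`
where `α`, `β` and `α-β` are all nonsquares in `𝔽_q`. Then `8 ∤ |E(𝔽_q)|`. -/
theorem inconvenient_curve_card (F : Type*) [Field F] [Fintype F]
    (hq : Fintype.card F % 4 = 1) (hp : 5 ≤ ringChar F)
    (α β : F) (hα : ¬IsSquare α) (hβ : ¬IsSquare β) (hαβ : ¬IsSquare (α - β)) :
    ¬(8 ∣ Nat.card
        (WeierstrassCurve.Affine.Point
          (WeierstrassCurve.toAffine
            (⟨0, -(α + β), 0, α * β, 0⟩ : WeierstrassCurve F)))) := by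
  classical
  intro h8
  set W : WeierstrassCurve.Affine F :=
    WeierstrassCurve.toAffine (⟨0, -(α + β), 0, α * β, 0⟩ : WeierstrassCurve F) with hW
  have h2 : (2 : F) ≠ 0 := by
    intro h
    have := (CharP.cast_eq_zero_iff F (ringChar F) 2).mp (by exact_mod_cast h)
    have := Nat.le_of_dvd (by norm_num) this
    omega
  have hα0 : α ≠ 0 := fun h => hα (h ▸ ⟨0, by ring⟩)
  have hβ0 : β ≠ 0 := fun h => hβ (h ▸ ⟨0, by ring⟩)
  have hαβ0 : α ≠ β := fun h => hαβ (by rw [h, sub_self]; exact ⟨0, by ring⟩)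
  have hneg1 : IsSquare (-1 : F) := by
    rw [FiniteField.isSquare_neg_one_iff]
    omega
  -- finiteness of points
  have hfin : Finite W.Point := by
    have hinj : Function.Injective (fun P : W.Point => match P with
        | .zero => (none : Option (F × F))
        | @Point.some _ _ _ x y _ => some (x, y)) := by
      rintro (_ | @⟨x₁, y₁, h₁⟩) (_ | @⟨x₂, y₂, h₂⟩) h <;>
        simp only [Option.some.injEq, Prod.mk.injEq, reduceCtorEq] at h
      · rfl
      · obtain ⟨rfl, rfl⟩ := h
        rfl
    exact Finite.of_injective _ hinj
  -- y-coordinate of 2-torsion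
  have classY : ∀ (x y : F) (h : W.Nonsingular x y),
      Point.some _ _ h + Point.some _ _ h = 0 → y = 0 := by
    intro x y h hP
    by_cases hy : y = W.negY x y
    · have : y = -y := by simpa [negY, hW] using hy
      have : 2 * y = 0 := by linear_combination this
      exact (mul_eq_zero.mp this).resolve_left h2
    · rw [add_self_of_Y_ne hy] at hP
      exact absurd hP (some_ne_zero _)
  -- x-coordinate of 2-torsion
  have classX : ∀ (x y : F) (h : W.Nonsingular x y),
      Point.some _ _ h + Point.some _ _ h = 0 → x = 0 ∨ x = α ∨ x = β := by
    intro x y h hP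
    have hy0 := classY x y h hP
    have heq := (W.equation_iff x y).mp h.1
    rw [hy0] at heq
    have hcube : x * (x - α) * (x - β) = 0 := by
      rw [hW] at heq
      linear_combination -heq
    rcases mul_eq_zero.mp hcube with h1 | h1
    · rcases mul_eq_zero.mp h1 with h1 | h1
      · exact Or.inl h1
      · exact Or.inr (Or.inl (sub_eq_zero.mp h1))
    · exact Or.inr (Or.inr (sub_eq_zero.mp h1))
  -- 2-torsion has at most 4 elements
  classical
  have hcard4 : Nat.card {P : W.Point // P + P = 0} ≤ 4 := by
    let code : F → Fin 3 := fun x => if x = 0 then 0 else if x = α then 1 else 2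
    have c0 : code 0 = 0 := by simp [code]
    have ca : code α = 1 := by simp [code, hα0]
    have cb : code β = 2 := by simp [code, hβ0, show β ≠ α from fun h => hαβ0 h.symm]
    have codeinj : ∀ x₁ x₂ : F, (x₁ = 0 ∨ x₁ = α ∨ x₁ = β) → (x₂ = 0 ∨ x₂ = α ∨ x₂ = β) →
        code x₁ = code x₂ → x₁ = x₂ := by
      intro x₁ x₂ h1 h2 hc
      rcases h1 with rfl | rfl | rfl <;> rcases h2 with rfl | rfl | rfl
      · rfl
      · rw [c0, ca] at hc; exact absurd hc (by decide)
      · rw [c0, cb] at hc; exact absurd hc (by decide)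
      · rw [ca, c0] at hc; exact absurd hc (by decide)
      · rfl
      · rw [ca, cb] at hc; exact absurd hc (by decide)
      · rw [cb, c0] at hc; exact absurd hc (by decide)
      · rw [cb, ca] at hc; exact absurd hc (by decide)
      · rfl
    let f : W.Point → Option (Fin 3) := fun P => match P with
      | .zero => none
      | @Point.some _ _ _ x _ _ => some (code x)
    have hinj : Function.Injective (fun P : {P : W.Point // P + P = 0} => f P.1) := by
      rintro ⟨(_ | @⟨x₁, y₁, h₁⟩), hP⟩ ⟨(_ | @⟨x₂, y₂, h₂⟩), hQ⟩ hPQ <;>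
        simp only [f, Option.some.injEq, reduceCtorEq] at hPQ
      · rfl
      · have hx := codeinj x₁ x₂ (classX x₁ y₁ h₁ hP) (classX x₂ y₂ h₂ hQ) hPQ
        have hy1 := classY x₁ y₁ h₁ hP
        have hy2 := classY x₂ y₂ h₂ hQ
        subst hx
        subst hy1
        subst hy2
        rfl
    have hle := Nat.card_le_card_of_injective _ hinj
    have : Nat.card (Option (Fin 3)) = 4 := by simp [Nat.card_eq_fintype_card]
    omega
  -- doubling formulas: x(2P) and x(2P) - α are squares
  have key : ∀ (x₀ y₀ : F) (h₀ : W.Nonsingular x₀ y₀) (hy : y₀ ≠ W.negY x₀ y₀),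
      IsSquare (W.addX x₀ x₀ (W.slope x₀ x₀ y₀ y₀)) ∧
      IsSquare (W.addX x₀ x₀ (W.slope x₀ x₀ y₀ y₀) - α) := by
    intro x₀ y₀ h₀ hy
    set L := W.slope x₀ x₀ y₀ y₀ with hLdef
    have hy0 : y₀ ≠ 0 := by
      intro h
      exact hy (by simp [negY, hW, h])
    have h2y : (2 * y₀) ≠ 0 := mul_ne_zero h2 hy0
    have heq := (W.equation_iff x₀ y₀).mp h₀.1
    have heq' : y₀ ^ 2 = x₀ ^ 3 - (α + β) * x₀ ^ 2 + α * β * x₀ := by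
      rw [hW] at heq
      linear_combination heq
    have hden : y₀ - W.negY x₀ y₀ = 2 * y₀ := by
      simp only [hW, negY]
      ring
    have hLnum : L * (2 * y₀) = 3 * x₀ ^ 2 - 2 * (α + β) * x₀ + α * β := by
      rw [hLdef, slope_of_Y_ne rfl hy, hden, div_mul_cancel₀ _ h2y]
      simp only [hW]
      ring
    have hXval : W.addX x₀ x₀ L = L ^ 2 + (α + β) - 2 * x₀ := by
      rw [hW]
      simp only [WeierstrassCurve.Affine.addX]
      ring
    constructor
    · refine ⟨(x₀ ^ 2 - α * β) / (2 * y₀), ?_⟩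
      rw [hXval, ← sq, div_pow, eq_div_iff (pow_ne_zero 2 h2y)]
      linear_combination (L * (2 * y₀) + (3 * x₀ ^ 2 - 2 * (α + β) * x₀ + α * β)) * hLnum +
        (4 * ((α + β) - 2 * x₀)) * heq'
    · refine ⟨(x₀ ^ 2 - 2 * α * x₀ + α * β) / (2 * y₀), ?_⟩
      rw [hXval, ← sq, div_pow, eq_div_iff (pow_ne_zero 2 h2y)]
      linear_combination (L * (2 * y₀) + (3 * x₀ ^ 2 - 2 * (α + β) * x₀ + α * β)) * hLnum +
        (4 * ((α + β) - 2 * x₀ - α)) * heq'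
  -- assemble
  refine aux_two_torsion h8 hcard4 ?_
  intro g hT4
  by_contra hT2
  rcases g with _ | @⟨x₀, y₀, h₀⟩
  · exact hT2 (add_zero 0)
  · by_cases hy : y₀ = W.negY x₀ y₀
    · exact hT2 (add_self_of_Y_eq hy)
    · rw [add_self_of_Y_ne hy] at hT4
      have hroots := classX _ _ _ hT4
      obtain ⟨hsq, hsqa⟩ := key x₀ y₀ h₀ hy
      rcases hroots with he | he | he
      · apply hα
        have hrw : α = (-1) * (W.addX x₀ x₀ (W.slope x₀ x₀ y₀ y₀) - α) := by
          rw [he]; ring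
        rw [hrw]
        exact hneg1.mul hsqa
      · exact hα (he ▸ hsq)
      · exact hβ (he ▸ hsq)
end
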